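/- Let T = a_0 I + a_1 D + ... + a_n D^n be an invertible operator in 𝒟(P_n) (a_0 ≠ 0) and let γ_1, ..., γ_n be the roots, with multiplicity, of a_0 zⁿ + a_1 z^{n−1} + ... + a_n. Then K_h(T) ≤ n (|γ_1| + ... + |γ_n|), i.e., for every nonconstant f ∈ P_n and every root v of Tf there exists a root u of f with |v − u| ≤ n(|γ_1| + ... + |γ_n|). -/

import Mathlib

open Polynomial

/-- `P n` is the space of complex polynomials of degree at most `n`. -/
noncomputable def Pn (n : ℕ) : Submodule ℂ (Polynomial ℂ) := Polynomial.degreeLT ℂ (n + 1)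

noncomputable instance instPnEndAddCommGroup (n : ℕ) : AddCommGroup (Module.End ℂ (Pn n)) :=
  LinearMap.addCommGroup

noncomputable instance instPnEndRing (n : ℕ) : Ring (Module.End ℂ (Pn n)) := Module.End.instRing

/-- The differentiation operator on `Pn n`. -/
noncomputable def Dop (n : ℕ) : Module.End ℂ (Pn n) :=
  (Polynomial.derivative (R := ℂ)).restrict (p := Pn n) (q := Pn n)
    (fun f hf => by
      simp only [Pn, Polynomial.mem_degreeLT] at *
      exact lt_of_le_of_lt (Polynomial.degree_derivative_le) hf)

/-- `calD n` is the span of `I, D, D^2, ..., D^n` in `L(Pn n)`. -/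
noncomputable def calD (n : ℕ) : Submodule ℂ (Module.End ℂ (Pn n)) :=
  Submodule.span ℂ (Set.range fun k : Fin (n + 1) => (Dop n) ^ (k : ℕ))

/-- Derivative as an endomorphism of `ℂ[X]`. -/
noncomputable def Dinf : Module.End ℂ (Polynomial ℂ) := Polynomial.derivative

lemma step_degree (g : Polynomial ℂ) (hg : 0 < g.degree) (γ : ℂ) :
    (g - γ • derivative g).degree = g.degree := by
  apply degree_sub_eq_left_of_degree_lt
  have hgne : g ≠ 0 := fun h => by simp [h] at hg
  calc (γ • derivative g).degree ≤ (derivative g).degree := degree_smul_le _ _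
    _ < g.degree := degree_derivative_lt hgne

lemma key_step (g : Polynomial ℂ) (hg : 0 < g.degree) (γ v : ℂ)
    (hv : (g - γ • derivative g).IsRoot v) :
    ∃ u, g.IsRoot u ∧ ‖v - u‖ ≤ g.natDegree * ‖γ‖ := by
  classical
  by_cases h0 : g.IsRoot v
  · exact ⟨v, h0, by simp [mul_nonneg, norm_nonneg]⟩
  have hgne : g ≠ 0 := fun h => by simp [h] at hg
  have hgv : eval v g ≠ 0 := h0
  have heq : eval v g = γ * eval v (derivative g) := by
    have h := hv
    simp only [IsRoot, eval_sub, eval_smul, smul_eq_mul, sub_eq_zero] at h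
    exact h
  set s := g.roots with hs
  set c := g.leadingCoeff with hc
  have hsg : g = C c * (s.map fun r => X - C r).prod :=
    (IsAlgClosed.splits g).eq_prod_roots
  -- a root exists
  obtain ⟨z, hz⟩ := Complex.exists_root hg
  have hzs : z ∈ s := by rw [hs, mem_roots hgne]; exact hz
  obtain ⟨u, hu_mem, hu_min⟩ := s.toFinset.exists_min_image
    (fun r => ‖v - r‖) ⟨z, Multiset.mem_toFinset.2 hzs⟩
  have hus : u ∈ s := Multiset.mem_toFinset.1 hu_mem
  refine ⟨u, ?_, ?_⟩
  · rw [hs, mem_roots hgne] at hus; exact hus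
  -- evaluation formulas
  have hevg : eval v g = c * (s.map fun r => (v - r)).prod := by
    conv_lhs => rw [hsg]
    rw [eval_mul, eval_C]
    congr 1
    rw [eval_multiset_prod, Multiset.map_map]
    exact congrArg Multiset.prod (Multiset.map_congr rfl (fun r _ => by simp))
  have hevg' : eval v (derivative g)
      = c * (s.map fun r => ((s.erase r).map fun r' => (v - r')).prod).sum := by
    conv_lhs => rw [hsg]
    rw [derivative_mul, derivative_C, zero_mul, zero_add, eval_mul, eval_C]
    congr 1
    rw [derivative_prod]
    have hsum : ∀ M : Multiset (Polynomial ℂ), eval v M.sum = (M.map (eval v)).sum := by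
      intro M
      simpa using map_multiset_sum (Polynomial.evalRingHom v) M
    rw [hsum, Multiset.map_map]
    congr 1
    apply Multiset.map_congr rfl
    intro r hr
    simp only [Function.comp_apply, derivative_sub, derivative_X, derivative_C, sub_zero,
      mul_one, eval_mul]
    rw [eval_multiset_prod, Multiset.map_map]
    exact congrArg Multiset.prod (Multiset.map_congr rfl (fun r' _ => by simp))
  set B : ℝ := (s.map fun r => ‖v - r‖).prod with hB
  set A : ℂ → ℝ := fun r => ((s.erase r).map fun r' => ‖v - r'‖).prod with hA
  have hAnn : ∀ r, 0 ≤ A r := by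
    intro r
    apply Multiset.prod_nonneg
    intro x hx
    rw [Multiset.mem_map] at hx
    obtain ⟨y, _, rfl⟩ := hx
    exact norm_nonneg _
  -- per term bound
  have hterm : ∀ r ∈ s, ‖v - u‖ * A r ≤ B := by
    intro r hr
    have hBr : B = ‖v - r‖ * A r := by
      rw [hB, hA]
      conv_lhs => rw [← Multiset.cons_erase hr]
      rw [Multiset.map_cons, Multiset.prod_cons]
    rw [hBr]
    exact mul_le_mul_of_nonneg_right (hu_min r (Multiset.mem_toFinset.2 hr)) (hAnn r)
  -- |g'(v)| bound
  have habs_g' : ‖eval v (derivative g)‖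
      ≤ ‖c‖ * (s.map A).sum := by
    rw [hevg', norm_mul]
    apply mul_le_mul_of_nonneg_left _ (norm_nonneg _)
    calc ‖(s.map fun r => ((s.erase r).map fun r' => (v - r')).prod).sum‖
        ≤ ((s.map fun r => ((s.erase r).map fun r' => (v - r')).prod).map fun x => ‖x‖).sum := by
          simpa using norm_multiset_sum_le ((s.map fun r => ((s.erase r).map fun r' => (v - r')).prod))
      _ = (s.map A).sum := by
          rw [Multiset.map_map]
          congr 1
          apply Multiset.map_congr rfl
          intro r _
          simp only [Function.comp_apply, hA]
          rw [show ∀ m : Multiset ℂ, ‖m.prod‖ = (m.map fun x => ‖x‖).prod from fun m => map_multiset_prod (normHom : ℂ →*₀ ℝ) m, Multiset.map_map]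
          rfl
  have hBeq : ‖eval v g‖ = ‖c‖ * B := by
    rw [hevg, norm_mul, hB]
    congr 1
    rw [show ∀ m : Multiset ℂ, ‖m.prod‖ = (m.map fun x => ‖x‖).prod from fun m => map_multiset_prod (normHom : ℂ →*₀ ℝ) m, Multiset.map_map]
    rfl
  have hsum : ‖v - u‖ * (s.map A).sum ≤ (Multiset.card s) * B := by
    calc ‖v - u‖ * (s.map A).sum
        = (s.map fun r => ‖v - u‖ * A r).sum :=
          (Multiset.sum_map_mul_left).symm
      _ ≤ (s.map fun _ => B).sum := Multiset.sum_map_le_sum_map _ _ hterm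
      _ = (Multiset.card s) * B := by
          rw [Multiset.map_const', Multiset.sum_replicate, nsmul_eq_mul]
  have hpos : 0 < ‖eval v g‖ := norm_pos_iff.mpr hgv
  have hmain : ‖v - u‖ * ‖eval v g‖
      ≤ (Multiset.card s * ‖γ‖) * ‖eval v g‖ := by
    calc ‖v - u‖ * ‖eval v g‖
        = ‖γ‖ * (‖v - u‖ * ‖eval v (derivative g)‖) := by
          rw [heq, norm_mul]; ring
      _ ≤ ‖γ‖ * (‖v - u‖ * (‖c‖ * (s.map A).sum)) := by
          apply mul_le_mul_of_nonneg_left _ (norm_nonneg _)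
          exact mul_le_mul_of_nonneg_left habs_g' (norm_nonneg _)
      _ = ‖γ‖ * ‖c‖ * (‖v - u‖ * (s.map A).sum) := by ring
      _ ≤ ‖γ‖ * ‖c‖ * ((Multiset.card s) * B) := by
          apply mul_le_mul_of_nonneg_left hsum
          exact mul_nonneg (norm_nonneg _) (norm_nonneg _)
      _ = (Multiset.card s * ‖γ‖) * (‖c‖ * B) := by ring
      _ = (Multiset.card s * ‖γ‖) * ‖eval v g‖ := by rw [hBeq]
  have hcard : ‖v - u‖ ≤ Multiset.card s * ‖γ‖ :=
    le_of_mul_le_mul_right (by simpa [mul_comm] using hmain) hpos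
  refine hcard.trans ?_
  apply mul_le_mul_of_nonneg_right _ (norm_nonneg _)
  exact_mod_cast Nat.cast_le.2 (card_roots' g)

/-- one step of the factored operator -/
noncomputable def stepf (γ : ℂ) (h : Polynomial ℂ) : Polynomial ℂ := h - γ • derivative h

lemma foldr_degree (l : List ℂ) (g : Polynomial ℂ) (hg : 0 < g.degree) :
    (l.foldr stepf g).degree = g.degree := by
  induction l with
  | nil => rfl
  | cons γ l ih =>
    rw [List.foldr_cons]
    have h1 : 0 < (l.foldr stepf g).degree := by rw [ih]; exact hg
    calc (stepf γ (l.foldr stepf g)).degree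
        = (l.foldr stepf g).degree := step_degree _ h1 γ
      _ = g.degree := ih

lemma chain (l : List ℂ) (g : Polynomial ℂ) (hg : 0 < g.degree) :
    ∀ v : ℂ, (l.foldr stepf g).IsRoot v →
    ∃ u, g.IsRoot u ∧ ‖v - u‖ ≤ g.natDegree * (l.map fun x => ‖x‖).sum := by
  induction l with
  | nil => exact fun v hv => ⟨v, hv, by simp⟩
  | cons γ l ih =>
    intro v hv
    rw [List.foldr_cons] at hv
    have hdeg : 0 < (l.foldr stepf g).degree := by rw [foldr_degree l g hg]; exact hg
    obtain ⟨u', hu', hle'⟩ := key_step (l.foldr stepf g) hdeg γ v hv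
    obtain ⟨u, hu, hle⟩ := ih u' hu'
    refine ⟨u, hu, ?_⟩
    have hnd : (l.foldr stepf g).natDegree = g.natDegree :=
      natDegree_eq_natDegree (foldr_degree l g hg)
    calc ‖v - u‖ ≤ ‖v - u'‖ + ‖u' - u‖ :=
          norm_sub_le_norm_sub_add_norm_sub v u' u
      _ ≤ g.natDegree * ‖γ‖ + g.natDegree * (l.map fun x => ‖x‖).sum := by
          apply add_le_add _ hle
          rw [← hnd]; exact hle'
      _ = g.natDegree * ((γ :: l).map fun x => ‖x‖).sum := by
          rw [List.map_cons, List.sum_cons]; ring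

noncomputable def Dinf' : Module.End ℂ (Polynomial ℂ) := Dinf

lemma prod_map_stepf (l : List ℂ) (f : Polynomial ℂ) :
    ((l.map fun c => (1 : Module.End ℂ (Polynomial ℂ)) - c • Dinf).prod) f
      = l.foldr stepf f := by
  induction l generalizing f with
  | nil => rfl
  | cons γ l ih =>
    rw [List.map_cons, List.prod_cons, List.foldr_cons, Module.End.mul_apply, ih]
    rfl

lemma aeval_apply_sum (n : ℕ) (a : Fin (n + 1) → ℂ) (f : Polynomial ℂ) :
    (Polynomial.aeval Dinf (∑ k : Fin (n + 1), C (a k) * X ^ (k : ℕ))) f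
      = ∑ k : Fin (n + 1), a k • ((Dinf ^ (k : ℕ)) f) := by
  rw [map_sum, LinearMap.sum_apply]
  apply Finset.sum_congr rfl
  intro k _
  rw [map_mul, aeval_C, map_pow, aeval_X]
  simp [Module.algebraMap_end_eq_smul_id, Module.End.mul_apply]

lemma aeval_apply_prod (n : ℕ) (a0 : ℂ) (γ : Fin n → ℂ) (f : Polynomial ℂ) :
    (Polynomial.aeval Dinf (C a0 * ∏ j : Fin n, (1 - C (γ j) * X))) f
      = a0 • ((List.ofFn γ).foldr stepf f) := by
  rw [map_mul, aeval_C, ← List.prod_ofFn (f := fun j => 1 - C (γ j) * X),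
    map_list_prod, List.map_ofFn]
  have hfn : (List.ofFn ((Polynomial.aeval Dinf) ∘ fun j => 1 - C (γ j) * X))
      = (List.ofFn γ).map fun c => (1 : Module.End ℂ (Polynomial ℂ)) - c • Dinf := by
    rw [List.map_ofFn]
    congr 1
    funext j
    simp only [Function.comp_apply, map_sub, map_one, map_mul, aeval_C, aeval_X]
    rw [← Algebra.smul_def]
  rw [hfn, Module.End.mul_apply, prod_map_stepf]
  simp [Module.algebraMap_end_eq_smul_id]

lemma poly_id (n : ℕ) (a : Fin (n + 1) → ℂ) (γ : Fin n → ℂ)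
    (hroots : (∑ k : Fin (n + 1), C (a k) * X ^ (n - (k : ℕ))) =
      C (a 0) * ∏ j : Fin n, (X - C (γ j))) :
    (∑ k : Fin (n + 1), C (a k) * X ^ (k : ℕ)) =
      C (a 0) * ∏ j : Fin n, (1 - C (γ j) * X) := by
  apply eq_of_infinite_eval_eq
  apply Set.Infinite.mono _ ((Set.finite_singleton (0 : ℂ)).infinite_compl)
  intro x hx
  have hx0 : x ≠ 0 := hx
  have h1 := congrArg (eval x⁻¹) hroots
  simp only [eval_finset_sum, eval_mul, eval_C, eval_pow, eval_X, eval_prod, eval_sub] at h1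
  simp only [Set.mem_setOf_eq, eval_finset_sum, eval_mul, eval_C, eval_pow, eval_X,
    eval_prod, eval_sub, eval_one]
  have h2 : ∀ k : Fin (n + 1), x ^ n * (a k * x⁻¹ ^ (n - (k : ℕ))) = a k * x ^ (k : ℕ) := by
    intro k
    have hk : (k : ℕ) + (n - (k : ℕ)) = n := Nat.add_sub_cancel' (Fin.is_le k)
    have hxn : x ^ n = x ^ (k : ℕ) * x ^ (n - (k : ℕ)) := by rw [← pow_add, hk]
    rw [hxn, inv_pow]
    field_simp
  have h3 : x ^ n * (a 0 * ∏ j : Fin n, (x⁻¹ - γ j)) = a 0 * ∏ j : Fin n, (1 - γ j * x) := by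
    have hxn : x ^ n = ∏ _j : Fin n, x := by simp
    calc x ^ n * (a 0 * ∏ j : Fin n, (x⁻¹ - γ j))
        = a 0 * ((∏ _j : Fin n, x) * ∏ j : Fin n, (x⁻¹ - γ j)) := by rw [hxn]; ring
      _ = a 0 * ∏ j : Fin n, (x * (x⁻¹ - γ j)) := by rw [← Finset.prod_mul_distrib]
      _ = a 0 * ∏ j : Fin n, (1 - γ j * x) := by
          congr 1
          apply Finset.prod_congr rfl
          intro j _
          rw [mul_sub, mul_inv_cancel₀ hx0]
          ring
  calc ∑ k : Fin (n + 1), a k * x ^ (k : ℕ)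
      = ∑ k : Fin (n + 1), x ^ n * (a k * x⁻¹ ^ (n - (k : ℕ))) :=
        Finset.sum_congr rfl fun k _ => (h2 k).symm
    _ = x ^ n * ∑ k : Fin (n + 1), a k * x⁻¹ ^ (n - (k : ℕ)) := (Finset.mul_sum _ _ _).symm
    _ = x ^ n * (a 0 * ∏ j : Fin n, (x⁻¹ - γ j)) := by rw [h1]
    _ = a 0 * ∏ j : Fin n, (1 - γ j * x) := h3

lemma Dop_pow_coe (n k : ℕ) : ∀ f : Pn n,
    (((Dop n ^ k) f : Pn n) : Polynomial ℂ) = (Dinf ^ k) (f : Polynomial ℂ) := by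
  induction k with
  | zero => intro f; simp
  | succ k ih =>
    intro f
    have hc : ∀ g : Pn n, ((Dop n g : Pn n) : Polynomial ℂ) = derivative (g : Polynomial ℂ) :=
      fun g => LinearMap.restrict_coe_apply _ _ _
    rw [pow_succ', Module.End.mul_apply, hc, ih, pow_succ', Module.End.mul_apply]
    rfl

/-- Let `T = a_0 I + a_1 D + ⋯ + a_n Dⁿ` be invertible in `𝒟(P_n)` (`a_0 ≠ 0`) and let
`γ_1, …, γ_n` be the roots, with multiplicity, of `a_0 zⁿ + a_1 z^{n-1} + ⋯ + a_n`.
Then `K_h(T) ≤ n(|γ_1| + ⋯ + |γ_n|)`: for every nonconstant `f ∈ P_n` and every root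
`v` of `Tf` there is a root `u` of `f` with `|v - u| ≤ n(|γ_1| + ⋯ + |γ_n|)`. -/
theorem Kh_le_n_sum_abs_roots (n : ℕ) (hn : 0 < n) (a : Fin (n + 1) → ℂ) (ha : a 0 ≠ 0)
    (γ : Fin n → ℂ)
    (hroots : (∑ k : Fin (n + 1), Polynomial.C (a k) * Polynomial.X ^ (n - (k : ℕ))) =
      Polynomial.C (a 0) * ∏ j : Fin n, (Polynomial.X - Polynomial.C (γ j)))
    (T : Module.End ℂ (Pn n)) (hT : T = ∑ k : Fin (n + 1), a k • (Dop n) ^ (k : ℕ)) :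
    ∀ f : Pn n, 0 < (f : Polynomial ℂ).degree →
      ∀ v, ((T f : Pn n) : Polynomial ℂ).IsRoot v →
        ∃ u, (f : Polynomial ℂ).IsRoot u ∧
          ‖v - u‖ ≤ (n : ℝ) * ∑ j : Fin n, ‖γ j‖ := by
  intro f hf v hv
  have hfne : (f : Polynomial ℂ) ≠ 0 := fun h => by simp [h] at hf
  have hcoe : ((T f : Pn n) : Polynomial ℂ)
      = a 0 • ((List.ofFn γ).foldr stepf (f : Polynomial ℂ)) := by
    rw [hT]
    have h1 : (((∑ k : Fin (n + 1), a k • (Dop n) ^ (k : ℕ)) f : Pn n) : Polynomial ℂ)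
        = ∑ k : Fin (n + 1), a k • ((Dinf ^ (k : ℕ)) (f : Polynomial ℂ)) := by
      rw [LinearMap.sum_apply, Submodule.coe_sum]
      apply Finset.sum_congr rfl
      intro k _
      rw [LinearMap.smul_apply, Submodule.coe_smul, Dop_pow_coe]
    rw [h1, ← aeval_apply_sum, poly_id n a γ hroots, aeval_apply_prod]
  rw [hcoe] at hv
  have hv' : ((List.ofFn γ).foldr stepf (f : Polynomial ℂ)).IsRoot v := by
    simp only [IsRoot, eval_smul, smul_eq_mul] at hv
    rcases mul_eq_zero.1 hv with h | h
    · exact absurd h ha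
    · exact h
  obtain ⟨u, hu, hle⟩ := chain (List.ofFn γ) (f : Polynomial ℂ) hf v hv'
  refine ⟨u, hu, hle.trans ?_⟩
  have hsum : ((List.ofFn γ).map fun x => ‖x‖).sum = ∑ j : Fin n, ‖γ j‖ := by
    rw [List.map_ofFn, List.sum_ofFn]
    rfl
  have hnn : 0 ≤ ∑ j : Fin n, ‖γ j‖ :=
    Finset.sum_nonneg fun j _ => norm_nonneg _
  rw [hsum]
  apply mul_le_mul_of_nonneg_right _ hnn
  have hdlt : (f : Polynomial ℂ).degree < ((n + 1 : ℕ) : WithBot ℕ) := by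
    have h2 : (f : Polynomial ℂ) ∈ Polynomial.degreeLT ℂ (n + 1) := f.2
    rwa [Polynomial.mem_degreeLT] at h2
  have : (f : Polynomial ℂ).natDegree < n + 1 :=
    (natDegree_lt_iff_degree_lt hfne).2 hdlt
  exact_mod_cast Nat.lt_succ_iff.1 this
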